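/- For every θ > 0 and every pair of real numbers 0 < a < b, there exists a unique pair (c0, c1) with c0 > c1 > 0 such that J(s_a; c0, c1) = a and J(s_b; c0, c1) = b. -/

import Mathlib

open Real Filter Set Topology


/-- The map `J(s; c0, c1) = (c1*s + c0) * ((s+1)/s)^(1/θ)` for real `s`,
using the real power of the positive quantity `(s+1)/s`. -/
noncomputable def Jmap (θ c0 c1 s : ℝ) : ℝ :=
  (c1 * s + c0) * ((s + 1) / s) ^ (1 / θ)

/-- `s_a = (1−θ)/(2θ) − (1/(2θ))·√(4θ·r + (1−θ)²)` where `r = c0/c1`. -/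
noncomputable def sA (θ r : ℝ) : ℝ :=
  (1 - θ) / (2 * θ) - 1 / (2 * θ) * Real.sqrt (4 * θ * r + (1 - θ) ^ 2)

/-- `s_b = (1−θ)/(2θ) + (1/(2θ))·√(4θ·r + (1−θ)²)` where `r = c0/c1`. -/
noncomputable def sB (θ r : ℝ) : ℝ :=
  (1 - θ) / (2 * θ) + 1 / (2 * θ) * Real.sqrt (4 * θ * r + (1 - θ) ^ 2)


noncomputable def LJ (θ x : ℝ) : ℝ :=
  (1 + 1/θ) * Real.log x + (1 - 1/θ) * Real.log (x+1)
    - (1 - 1/θ) * Real.log (x + 1/θ) - (1 + 1/θ) * Real.log (x + 1/θ + 1)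

lemma hasDerivAt_log_add (c : ℝ) {x : ℝ} (h : x + c ≠ 0) :
    HasDerivAt (fun y => Real.log (y + c)) (x + c)⁻¹ x := by
  simpa [Function.comp_def] using (Real.hasDerivAt_log h).comp x ((hasDerivAt_id x).add_const c)

lemma hasDerivAt_LJ {θ x : ℝ} (hθ : 0 < θ) (hx : 0 < x) :
    HasDerivAt (LJ θ)
      ((1+1/θ)/x + (1-1/θ)/(x+1) - (1-1/θ)/(x+1/θ) - (1+1/θ)/(x+1/θ+1)) x := by
  have hτ : 0 < 1/θ := by positivity
  have h1 : (x + (0:ℝ)) ≠ 0 := by simp [hx.ne']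
  have h2 : (x + (1:ℝ)) ≠ 0 := by positivity
  have h3 : (x + 1/θ) ≠ 0 := by positivity
  have h4 : (x + (1/θ + 1)) ≠ 0 := by positivity
  have d1 : HasDerivAt (fun y : ℝ => Real.log y) x⁻¹ x := Real.hasDerivAt_log hx.ne'
  have d2 := hasDerivAt_log_add 1 h2
  have d3 := hasDerivAt_log_add (1/θ) h3
  have d4 := hasDerivAt_log_add (1/θ + 1) h4
  have key := (((d1.const_mul (1+1/θ)).add (d2.const_mul (1-1/θ))).sub
      (d3.const_mul (1-1/θ))).sub (d4.const_mul (1+1/θ))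
  have funeq : LJ θ = fun y : ℝ => (1+1/θ) * Real.log y + (1-1/θ) * Real.log (y+1)
      - (1-1/θ) * Real.log (y+1/θ) - (1+1/θ) * Real.log (y+(1/θ+1)) := by
    funext y; unfold LJ; rw [add_assoc]
  rw [funeq]
  convert key using 1
  · rfl
  · rfl
  · rfl
  ring

lemma LJ_deriv_pos {θ x : ℝ} (hθ : 0 < θ) (hx : 0 < x) :
    0 < (1+1/θ)/x + (1-1/θ)/(x+1) - (1-1/θ)/(x+1/θ) - (1+1/θ)/(x+1/θ+1) := by
  set τ := 1/θ with hτdef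
  have hτ : 0 < τ := by positivity
  have h2 : (0:ℝ) < x+1 := by linarith
  have h3 : (0:ℝ) < x+τ := by linarith
  have h4 : (0:ℝ) < x+τ+1 := by linarith
  have k1 : 1/(x+τ) < 1/x := one_div_lt_one_div_of_lt hx (by linarith)
  have k2 : 1/(x+τ+1) < 1/(x+1) := one_div_lt_one_div_of_lt h2 (by linarith)
  have k3 : 1/(x+1) < 1/x := one_div_lt_one_div_of_lt hx (by linarith)
  have k4 : 1/(x+τ+1) < 1/(x+τ) := one_div_lt_one_div_of_lt h3 (by linarith)
  have key : (1+τ)/x + (1-τ)/(x+1) - (1-τ)/(x+τ) - (1+τ)/(x+τ+1)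
      = (1/x - 1/(x+τ)) + (1/(x+1) - 1/(x+τ+1)) + τ*(1/x - 1/(x+1))
        + τ*(1/(x+τ) - 1/(x+τ+1)) := by ring
  rw [key]
  have t3 : 0 < τ*(1/x - 1/(x+1)) := by
    apply mul_pos hτ; linarith
  have t4 : 0 < τ*(1/(x+τ) - 1/(x+τ+1)) := by
    apply mul_pos hτ; linarith
  nlinarith

lemma LJ_strictMonoOn {θ : ℝ} (hθ : 0 < θ) : StrictMonoOn (LJ θ) (Ioi 0) := by
  apply strictMonoOn_of_deriv_pos (convex_Ioi 0)
  · exact fun x hx => (hasDerivAt_LJ hθ hx).continuousAt.continuousWithinAt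
  · intro x hx
    rw [interior_Ioi] at hx
    rw [(hasDerivAt_LJ hθ hx).deriv]
    exact LJ_deriv_pos hθ hx

lemma tendsto_LJ_atBot {θ : ℝ} (hθ : 0 < θ) : Tendsto (LJ θ) (𝓝[>] (0:ℝ)) atBot := by
  have hτ : 0 < 1/θ := by positivity
  have h1 : Tendsto (fun x : ℝ => (1+1/θ) * Real.log x) (𝓝[>] (0:ℝ)) atBot :=
    (Real.tendsto_log_nhdsGT_zero).const_mul_atBot (by positivity)
  have h2 : Tendsto (fun x : ℝ => (1 - 1/θ) * Real.log (x+1)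
      - (1 - 1/θ) * Real.log (x + 1/θ) - (1 + 1/θ) * Real.log (x + 1/θ + 1))
      (𝓝[>] (0:ℝ)) (𝓝 ((1 - 1/θ) * Real.log (0+1)
      - (1 - 1/θ) * Real.log (0 + 1/θ) - (1 + 1/θ) * Real.log (0 + 1/θ + 1))) := by
    apply Tendsto.mono_left _ nhdsWithin_le_nhds
    have c1 : ContinuousAt (fun x : ℝ => Real.log (x+1)) 0 :=
      (Real.continuousAt_log (by norm_num)).comp (by fun_prop)
    have c2 : ContinuousAt (fun x : ℝ => Real.log (x+1/θ)) 0 :=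
      (Real.continuousAt_log (by positivity)).comp (by fun_prop)
    have c3 : ContinuousAt (fun x : ℝ => Real.log (x+1/θ+1)) 0 :=
      (Real.continuousAt_log (by positivity)).comp (by fun_prop)
    exact ((continuousAt_const.mul c1).sub (continuousAt_const.mul c2)).sub
      (continuousAt_const.mul c3)
  have := h1.atBot_add h2
  apply this.congr
  intro x; unfold LJ; ring

lemma aux_div_tendsto (c : ℝ) : Tendsto (fun x : ℝ => x/(x+c)) atTop (𝓝 1) := by
  have h : Tendsto (fun x : ℝ => 1 - c/(x+c)) atTop (𝓝 1) := by
    have := Tendsto.div_atTop (tendsto_const_nhds (x := c))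
      (tendsto_atTop_add_const_right atTop c tendsto_id)
    simpa using (tendsto_const_nhds (x := (1:ℝ))).sub this
  apply h.congr'
  filter_upwards [eventually_gt_atTop (max 0 (-c))] with x hx
  have hxc : x + c ≠ 0 := by
    have := lt_of_le_of_lt (le_max_right 0 (-c)) hx; intro h0; nlinarith [this]
  field_simp
  ring

lemma tendsto_LJ_atTop {θ : ℝ} (hθ : 0 < θ) : Tendsto (LJ θ) atTop (𝓝 0) := by
  have hτ : 0 < 1/θ := by positivity
  have l1 : Tendsto (fun x : ℝ => Real.log (x/(x+(1/θ+1)))) atTop (𝓝 0) := by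
    have := ((Real.continuousAt_log (by norm_num : (1:ℝ) ≠ 0)).tendsto).comp
      (aux_div_tendsto (1/θ+1))
    simpa [Function.comp_def] using this
  have l2 : Tendsto (fun x : ℝ => Real.log ((x+1)/(x+1/θ))) atTop (𝓝 0) := by
    have base := ((Real.continuousAt_log (by norm_num : (1:ℝ) ≠ 0)).tendsto).comp
      (aux_div_tendsto (1/θ-1))
    have comp := base.comp (tendsto_atTop_add_const_right atTop 1 tendsto_id)
    rw [Real.log_one] at comp
    apply comp.congr
    intro x
    simp only [Function.comp_apply, id]
    congr 1
    ring
  have sum := (l1.const_mul (1+1/θ)).add (l2.const_mul (1-1/θ))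
  rw [show ((1+1/θ)*0 + (1-1/θ)*0 : ℝ) = 0 by ring] at sum
  apply sum.congr'
  filter_upwards [eventually_gt_atTop (0:ℝ)] with x hx
  have h2 : (0:ℝ) < x+1 := by linarith
  have h3 : (0:ℝ) < x+1/θ := by linarith
  have h4 : (0:ℝ) < x+(1/θ+1) := by linarith
  rw [Real.log_div hx.ne' h4.ne', Real.log_div h2.ne' h3.ne']
  unfold LJ; ring

lemma LJ_existsUnique {θ K : ℝ} (hθ : 0 < θ) (hK : K < 0) :
    ∃! x : ℝ, 0 < x ∧ LJ θ x = K := by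
  obtain ⟨x₀, hx₀K, hx₀⟩ : ∃ x₀, LJ θ x₀ < K ∧ 0 < x₀ := by
    have := (tendsto_LJ_atBot hθ).eventually (eventually_lt_atBot K)
    exact (this.and self_mem_nhdsWithin).exists
  obtain ⟨x₁, hx₁K, hx₁⟩ : ∃ x₁, K < LJ θ x₁ ∧ x₀ ≤ x₁ := by
    have h := (tendsto_LJ_atTop hθ).eventually_const_lt hK
    exact (h.and (eventually_ge_atTop x₀)).exists
  have hsub : Icc x₀ x₁ ⊆ Ioi 0 := fun y hy => lt_of_lt_of_le hx₀ hy.1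
  have hcont : ContinuousOn (LJ θ) (Icc x₀ x₁) := fun y hy =>
    (hasDerivAt_LJ hθ (hsub hy)).continuousAt.continuousWithinAt
  obtain ⟨x, hxmem, hxval⟩ := intermediate_value_Icc hx₁ hcont
    (mem_Icc.mpr ⟨hx₀K.le, hx₁K.le⟩)
  refine ⟨x, ⟨hsub hxmem, hxval⟩, ?_⟩
  rintro y ⟨hy, hyval⟩
  exact (LJ_strictMonoOn hθ).injOn hy (hsub hxmem) (by rw [hyval, hxval])

noncomputable def gJ (θ x : ℝ) : ℝ := θ * (x * (x + 1)) * ((x + 1) / x) ^ (1/θ)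
noncomputable def hJ (θ x : ℝ) : ℝ := θ * (x * (x + 1)) * (x / (x + 1)) ^ (1/θ)

lemma gJ_pos {θ x : ℝ} (hθ : 0 < θ) (hx : 0 < x) : 0 < gJ θ x := by
  have h1 : (0:ℝ) < x + 1 := by linarith
  unfold gJ; positivity

lemma hJ_pos {θ x : ℝ} (hθ : 0 < θ) (hx : 0 < x) : 0 < hJ θ x := by
  have h1 : (0:ℝ) < x + 1 := by linarith
  unfold hJ; positivity

lemma log_hJ {θ x : ℝ} (hθ : 0 < θ) (hx : 0 < x) :
    Real.log (hJ θ x) = Real.log θ + Real.log x + Real.log (x+1)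
      + (1/θ) * (Real.log x - Real.log (x+1)) := by
  have h1 : (0:ℝ) < x + 1 := by linarith
  unfold hJ
  rw [Real.log_mul (by positivity) (by positivity), Real.log_rpow (by positivity),
    Real.log_mul hθ.ne' (by positivity), Real.log_mul hx.ne' h1.ne',
    Real.log_div hx.ne' h1.ne']
  ring

lemma log_gJ {θ x : ℝ} (hθ : 0 < θ) (hx : 0 < x) :
    Real.log (gJ θ x) = Real.log θ + Real.log x + Real.log (x+1)
      + (1/θ) * (Real.log (x+1) - Real.log x) := by
  have h1 : (0:ℝ) < x + 1 := by linarith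
  unfold gJ
  rw [Real.log_mul (by positivity) (by positivity), Real.log_rpow (by positivity),
    Real.log_mul hθ.ne' (by positivity), Real.log_mul hx.ne' h1.ne',
    Real.log_div h1.ne' hx.ne']
  ring

lemma key_iff {θ a b x : ℝ} (hθ : 0 < θ) (ha : 0 < a) (hb : 0 < b) (hx : 0 < x) :
    b * hJ θ x = a * gJ θ (x + 1/θ) ↔ LJ θ x = Real.log a - Real.log b := by
  have ht : 0 < x + 1/θ := by positivity
  have hP : 0 < b * hJ θ x := mul_pos hb (hJ_pos hθ hx)
  have hQ : 0 < a * gJ θ (x + 1/θ) := mul_pos ha (gJ_pos hθ ht)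
  have hlog : Real.log (b * hJ θ x) = Real.log (a * gJ θ (x + 1/θ)) ↔
      LJ θ x = Real.log a - Real.log b := by
    rw [Real.log_mul hb.ne' (hJ_pos hθ hx).ne', Real.log_mul ha.ne' (gJ_pos hθ ht).ne',
      log_hJ hθ hx, log_gJ hθ ht]
    unfold LJ
    constructor <;> intro h <;>
      · rw [show x + 1/θ + 1 = x + 1/θ + 1 from rfl] at *
        linarith [h]
  constructor
  · intro h; exact hlog.mp (by rw [h])
  · intro h
    exact Real.log_injOn_pos (mem_Ioi.mpr hP) (mem_Ioi.mpr hQ) (hlog.mpr h)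




noncomputable def Aof (θ r : ℝ) : ℝ :=
  (Real.sqrt (4 * θ * r + (1 - θ) ^ 2) - (1 + θ)) / (2 * θ)

lemma Aof_pos {θ r : ℝ} (hθ : 0 < θ) (hr : 1 < r) : 0 < Aof θ r := by
  have h : 1 + θ < Real.sqrt (4 * θ * r + (1 - θ) ^ 2) := by
    rw [Real.lt_sqrt (by positivity)]
    nlinarith
  unfold Aof
  exact div_pos (by linarith) (by positivity)

lemma r_eq {θ r : ℝ} (hθ : 0 < θ) (hD : 0 ≤ 4 * θ * r + (1 - θ) ^ 2) :
    θ * (Aof θ r) ^ 2 + (1 + θ) * Aof θ r + 1 = r := by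
  have hs : Real.sqrt (4 * θ * r + (1 - θ) ^ 2) ^ 2 = 4 * θ * r + (1 - θ) ^ 2 :=
    Real.sq_sqrt hD
  have hs' : Real.sqrt (θ * 4 * r + (1 - θ) ^ 2) ^ 2 = 4 * θ * r + (1 - θ) ^ 2 := by
    rw [mul_comm θ 4]; exact hs
  unfold Aof
  field_simp
  nlinarith [hs, hs']

lemma Aof_r {θ A : ℝ} (hθ : 0 < θ) (hA : 0 ≤ A) :
    Aof θ (θ * A ^ 2 + (1 + θ) * A + 1) = A := by
  unfold Aof
  rw [show 4 * θ * (θ * A ^ 2 + (1 + θ) * A + 1) + (1 - θ) ^ 2 = (2 * θ * A + (1 + θ)) ^ 2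
      by ring,
    Real.sqrt_sq (by nlinarith [mul_nonneg hθ.le hA])]
  field_simp
  ring

lemma sA_eq {θ : ℝ} (hθ : 0 < θ) (r : ℝ) : sA θ r = -(Aof θ r + 1) := by
  unfold sA Aof; field_simp; ring

lemma sB_eq {θ : ℝ} (hθ : 0 < θ) (r : ℝ) : sB θ r = Aof θ r + 1/θ := by
  unfold sB Aof; field_simp; ring


lemma Jmap_at_sA {θ c0 c1 A : ℝ} (hθ : 0 < θ)
    (hc0 : c0 = c1 * (θ * A ^ 2 + (1 + θ) * A + 1)) :
    Jmap θ c0 c1 (-(A + 1)) = c1 * hJ θ A := by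
  unfold Jmap hJ
  rw [show -(A + 1) + 1 = -A by ring, show (-A) / -(A+1) = A / (A+1) from neg_div_neg_eq A (A+1),
    hc0]
  ring

lemma Jmap_at_sB {θ c0 c1 A : ℝ} (hθ : 0 < θ)
    (hc0 : c0 = c1 * (θ * A ^ 2 + (1 + θ) * A + 1)) :
    Jmap θ c0 c1 (A + 1/θ) = c1 * gJ θ (A + 1/θ) := by
  unfold Jmap gJ
  rw [hc0, show c1 * (A + 1/θ) + c1 * (θ * A ^ 2 + (1 + θ) * A + 1)
      = θ * ((A + 1/θ) * (A + 1/θ + 1)) * c1 by field_simp; ring]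
  ring

/-- For every `θ > 0` and `0 < a < b` there is a unique pair `(c0, c1)` with
`c0 > c1 > 0` such that `J(s_a; c0, c1) = a` and `J(s_b; c0, c1) = b`. -/
theorem stmt0 (θ a b : ℝ) (hθ : 0 < θ) (ha : 0 < a) (hab : a < b) :
    ∃! p : ℝ × ℝ, (0 < p.2 ∧ p.2 < p.1) ∧
      Jmap θ p.1 p.2 (sA θ (p.1 / p.2)) = a ∧
      Jmap θ p.1 p.2 (sB θ (p.1 / p.2)) = b := by
  have hb : 0 < b := ha.trans hab
  have hK : Real.log a - Real.log b < 0 := sub_neg.mpr (Real.log_lt_log ha hab)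
  obtain ⟨A, ⟨hA, hLA⟩, hAuniq⟩ := LJ_existsUnique hθ hK
  have hgpos : 0 < gJ θ (A + 1/θ) := gJ_pos hθ (by positivity)
  have heq : b * hJ θ A = a * gJ θ (A + 1/θ) := (key_iff hθ ha hb hA).mpr hLA
  set r : ℝ := θ * A ^ 2 + (1 + θ) * A + 1 with hrdef
  have hr1 : 1 < r := by rw [hrdef]; nlinarith
  set c1 : ℝ := b / gJ θ (A + 1/θ) with hc1def
  have hc1 : 0 < c1 := div_pos hb hgpos
  set c0 : ℝ := c1 * r with hc0def
  have hc0r : c0 = c1 * (θ * A ^ 2 + (1 + θ) * A + 1) := by rw [hc0def, hrdef]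
  have hdiv : c0 / c1 = r := by rw [hc0def]; field_simp
  have hAof : Aof θ (c0 / c1) = A := by rw [hdiv, hrdef]; exact Aof_r hθ hA.le
  refine ⟨(c0, c1), ⟨⟨hc1, ?_⟩, ?_, ?_⟩, ?_⟩
  · calc c1 = c1 * 1 := (mul_one c1).symm
      _ < c1 * r := (mul_lt_mul_iff_right₀ hc1).mpr hr1
  · show Jmap θ c0 c1 (sA θ (c0 / c1)) = a
    rw [sA_eq hθ, hAof, Jmap_at_sA hθ hc0r, hc1def, div_mul_eq_mul_div, heq,
      mul_div_assoc, div_self hgpos.ne', mul_one]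
  · show Jmap θ c0 c1 (sB θ (c0 / c1)) = b
    rw [sB_eq hθ, hAof, Jmap_at_sB hθ hc0r, hc1def, div_mul_cancel₀ _ hgpos.ne']
  · rintro ⟨c0', c1'⟩ ⟨⟨hc1', hlt'⟩, hJa', hJb'⟩
    simp only at hJa' hJb' hc1' hlt'
    have hc1'pos : 0 < c1' := hc1'
    have hr' : 1 < c0' / c1' := (one_lt_div hc1'pos).mpr hlt'
    set A' := Aof θ (c0' / c1') with hA'def
    have hA'pos : 0 < A' := Aof_pos hθ hr'
    have hD : (0:ℝ) ≤ 4 * θ * (c0' / c1') + (1 - θ) ^ 2 := by nlinarith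
    have hr'eq : θ * A' ^ 2 + (1 + θ) * A' + 1 = c0' / c1' := by
      rw [hA'def]; exact r_eq hθ hD
    have hc0' : c0' = c1' * (θ * A' ^ 2 + (1 + θ) * A' + 1) := by
      rw [hr'eq, mul_div_cancel₀ _ hc1'pos.ne']
    rw [sA_eq hθ, ← hA'def, Jmap_at_sA hθ hc0'] at hJa'
    rw [sB_eq hθ, ← hA'def, Jmap_at_sB hθ hc0'] at hJb'
    have hg' : 0 < gJ θ (A' + 1/θ) := gJ_pos hθ (by positivity)
    have heq' : b * hJ θ A' = a * gJ θ (A' + 1/θ) := by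
      rw [← hJb', ← hJa']; ring
    have hLA' : LJ θ A' = Real.log a - Real.log b := (key_iff hθ ha hb hA'pos).mp heq'
    have hAA : A' = A := hAuniq A' ⟨hA'pos, hLA'⟩
    have hc1eq : c1' = c1 := by
      rw [hAA] at hJb'
      rw [hc1def, ← hJb', mul_div_cancel_right₀ _ hgpos.ne']
    have hc0eq : c0' = c0 := by
      rw [hc0', hAA, hc1eq, hc0def, hrdef]
    exact Prod.ext hc0eq hc1eq
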